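/- Vector-valued Gelfand–Mazur theorem: suppose that every element of L⁰(Ω, A) with unit support is invertible, i.e., for every a.e. strongly measurable f : Ω → A with ‖f(ω)‖ ≠ 0 for μ-almost every ω there exists an a.e. strongly measurable g : Ω → A with f(ω)g(ω) = g(ω)f(ω) = 1 a.e. Then L⁰(Ω, A) is isometrically isomorphic to L⁰(Ω, ℂ): for every a.e. strongly measurable f : Ω → A there exists a measurable a_f : Ω → ℂ, unique up to a.e. equality, with f(ω) = a_f(ω)·1 for a.e. ω, and moreover ‖f(ω)‖ = |a_f(ω)| a.e. and a_{fg} = a_f·a_g a.e. (Theorem 3.1, specialized to E = L⁰(Ω) and the constant measurable bundle 𝒳(ω) = A.) -/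

import Mathlib

open MeasureTheory Filter

/-- vector-valued Gelfand–Mazur theorem: if every element of
`L⁰(Ω, A)` with unit support is invertible (for every a.e. strongly measurable
`f` with `‖f ω‖ ≠ 0` a.e. there is an a.e. strongly measurable two-sided inverse),
then `L⁰(Ω, A)` is isometrically isomorphic to `L⁰(Ω, ℂ)`: there is an assignment
`f ↦ T f` such that `T f` is measurable, `f ω = T f ω • 1` a.e., `‖f ω‖ = |T f ω|`
a.e., `T f` is the unique (up to a.e. equality) measurable scalar representative of
`f`, and `T` is multiplicative: `T (f·g) = T f · T g` a.e. (Theorem 3.1.) -/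
theorem stmt11 {Ω : Type*} [MeasurableSpace Ω] (μ : Measure Ω) [IsFiniteMeasure μ]
    (hμ : 0 < μ Set.univ)
    {A : Type*} [NormedRing A] [NormedAlgebra ℂ A] [CompleteSpace A] [NormOneClass A]
    (hinv : ∀ f : Ω → A, AEStronglyMeasurable f μ → (∀ᵐ ω ∂μ, ‖f ω‖ ≠ 0) →
      ∃ g : Ω → A, AEStronglyMeasurable g μ ∧
        ∀ᵐ ω ∂μ, f ω * g ω = 1 ∧ g ω * f ω = 1) :
    ∃ T : (Ω → A) → (Ω → ℂ),
      (∀ f : Ω → A, AEStronglyMeasurable f μ →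
        Measurable (T f) ∧
        (∀ᵐ ω ∂μ, f ω = T f ω • (1 : A)) ∧
        (∀ᵐ ω ∂μ, ‖f ω‖ = ‖T f ω‖)) ∧
      (∀ f : Ω → A, AEStronglyMeasurable f μ → ∀ a : Ω → ℂ, Measurable a →
        (∀ᵐ ω ∂μ, f ω = a ω • (1 : A)) → T f =ᵐ[μ] a) ∧
      (∀ f g : Ω → A, AEStronglyMeasurable f μ → AEStronglyMeasurable g μ →
        T (fun ω => f ω * g ω) =ᵐ[μ] fun ω => T f ω * T g ω) := by
  have hμ' : μ ≠ 0 := by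
    intro h; rw [h] at hμ; simp at hμ
  haveI : NeBot (ae μ) := ae_neBot.mpr hμ'
  -- A is a division ring
  have hA : ∀ {a : A}, IsUnit a ↔ a ≠ 0 := by
    intro a
    constructor
    · rintro hu rfl
      have h1 : (1 : A) ≠ 0 := by
        intro h
        have h2 := norm_one (α := A)
        rw [h] at h2
        simp at h2
      obtain ⟨u, hu'⟩ := hu
      have := u.mul_inv
      rw [hu'] at this
      simp at this
      exact h1 this.symm
    · intro ha
      obtain ⟨g, hg, hfg⟩ := hinv (fun _ => a) aestronglyMeasurable_const
        (Eventually.of_forall fun _ => by simpa [norm_eq_zero] using ha)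
      obtain ⟨ω, h1, h2⟩ := hfg.exists
      exact ⟨⟨a, g ω, h1, h2⟩, rfl⟩
  let e : ℂ ≃ₐ[ℂ] A := NormedRing.algEquivComplexOfComplete hA
  have hnorm : ∀ z : ℂ, ‖(z • (1 : A))‖ = ‖z‖ := by
    intro z
    rw [norm_smul, norm_one, mul_one]
  have he : ∀ z : ℂ, e z = z • (1 : A) := fun z => by
    simp [e, NormedRing.algEquivComplexOfComplete, Algebra.algebraMap_eq_smul_one]
    exact Algebra.algebraMap_eq_smul_one z
  have hinj : ∀ z w : ℂ, z • (1 : A) = w • (1 : A) → z = w := by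
    intro z w h
    rw [← he, ← he] at h
    exact e.injective h
  have hφcont : Continuous (e.symm : A → ℂ) := by
    have : Isometry (e.symm : A → ℂ) := by
      refine AddMonoidHomClass.isometry_of_norm _ fun a => ?_
      have h3 : a = e.symm a • (1 : A) := by rw [← he, e.apply_symm_apply]
      conv_rhs => rw [h3]
      rw [norm_smul, norm_one, mul_one]
    exact this.continuous
  classical
  refine ⟨fun f => if hf : AEStronglyMeasurable f μ then
      fun ω => e.symm (hf.mk f ω) else 0, ?_, ?_, ?_⟩
  · intro f hf
    simp only [dif_pos hf]
    have hrep : ∀ᵐ ω ∂μ, f ω = e.symm (hf.mk f ω) • (1 : A) := by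
      filter_upwards [hf.ae_eq_mk] with ω hω
      rw [hω, ← he, e.apply_symm_apply]
    refine ⟨(hφcont.comp_stronglyMeasurable hf.stronglyMeasurable_mk).measurable, hrep, ?_⟩
    filter_upwards [hrep] with ω hω
    rw [hω, hnorm]
  · intro f hf a ha hrep
    simp only [dif_pos hf]
    filter_upwards [hrep, hf.ae_eq_mk] with ω h1 h2
    apply hinj
    rw [← he, e.apply_symm_apply, ← h2, h1]
  · intro f g hf hg
    have hfg : AEStronglyMeasurable (fun ω => f ω * g ω) μ := hf.mul hg
    simp only [dif_pos hfg, dif_pos hf, dif_pos hg]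
    filter_upwards [hfg.ae_eq_mk, hf.ae_eq_mk, hg.ae_eq_mk] with ω h1 h2 h3
    apply hinj
    rw [← he, ← he, e.apply_symm_apply, ← h1, h2, h3, map_mul,
      e.apply_symm_apply, e.apply_symm_apply]
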